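/- Let Ω ⊆ ℝⁿ be nonempty, let F be a Taylorian 1-field on Ω with κ := Γ¹(F;Ω) > 0, and let u⁺(x) := max_{v∈Λ_x} inf_{a∈Ω} Ψ⁺(F,x,a,v), u⁻(x) := min_{v∈Λ_x} sup_{a∈Ω} Ψ⁻(F,x,a,v). Then every minimal Lipschitz extension G of F on ℝⁿ satisfies u⁻(x) ≤ g_x ≤ u⁺(x) for all x ∈ ℝⁿ. -/

import Mathlib

noncomputable section

open scoped RealInnerProductSpace

section GammaDefs

variable {H : Type*} [NormedAddCommGroup H] [InnerProductSpace ℝ H]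

/-- Evaluation of the first-degree polynomial `F(x)` at `a`:
`F(x)(a) = f_x + ⟨D_xf, a - x⟩`. -/
def fieldEval (f : H → ℝ) (Df : H → H) (x a : H) : ℝ :=
  f x + ⟪Df x, a - x⟫

/-- `Γ¹(F; x, y) = 2 · sup_{a} |F(x)(a) - F(y)(a)| / (‖x-a‖² + ‖y-a‖²)` for `x ≠ y`. -/
def gammaPair (f : H → ℝ) (Df : H → H) (x y : H) : ℝ :=
  ⨆ a : H, 2 * |fieldEval f Df x a - fieldEval f Df y a| / (‖x - a‖ ^ 2 + ‖y - a‖ ^ 2)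

/-- The set of values `Γ¹(F; x, y)` for `x ≠ y` ranging over `S`. -/
def gammaVals (f : H → ℝ) (Df : H → H) (S : Set H) : Set ℝ :=
  {t | ∃ x ∈ S, ∃ y ∈ S, x ≠ y ∧ t = gammaPair f Df x y}

/-- `Γ¹(F; S) = sup_{x ≠ y ∈ S} Γ¹(F; x, y)` (real supremum, `0` if `S` has at most one point). -/
def gammaOn (f : H → ℝ) (Df : H → H) (S : Set H) : ℝ :=
  sSup (gammaVals f Df S)

end GammaDefs

section LipDefs

variable {α β : Type*} [NormedAddCommGroup α] [NormedAddCommGroup β]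

/-- The set of difference quotients `‖g x - g y‖ / ‖x - y‖`, `x ≠ y ∈ S`. -/
def lipVals (g : α → β) (S : Set α) : Set ℝ :=
  {t | ∃ x ∈ S, ∃ y ∈ S, x ≠ y ∧ t = ‖g x - g y‖ / ‖x - y‖}

/-- `Lip(g; S) = sup_{x ≠ y ∈ S} ‖g x - g y‖ / ‖x - y‖` (real supremum). -/
def lipOn (g : α → β) (S : Set α) : ℝ :=
  sSup (lipVals g S)

end LipDefs

section PsiDefs

variable {H : Type*} [NormedAddCommGroup H] [InnerProductSpace ℝ H]

/-- `v_{a,b} = ½(D_af + D_bf) + (κ/2)(b - a)`. -/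
def vab (Df : H → H) (κ : ℝ) (a b : H) : H :=
  (1 / 2 : ℝ) • (Df a + Df b) + (κ / 2) • (b - a)

/-- `α_{a,b}`. -/
def alphaab (f : H → ℝ) (Df : H → H) (κ : ℝ) (a b : H) : ℝ :=
  2 * κ * (f a - f b) + κ * ⟪Df a + Df b, b - a⟫
    - 1 / 2 * ‖Df a - Df b‖ ^ 2 + κ ^ 2 / 2 * ‖a - b‖ ^ 2

/-- `β_{a,b}(x)`. -/
def betaab (Df : H → H) (κ : ℝ) (a b x : H) : ℝ :=
  ‖(1 / 2 : ℝ) • (Df a - Df b) + (κ / 2) • ((2 : ℝ) • x - a - b)‖ ^ 2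

/-- `r_{a,b}(x) = √(α_{a,b} + β_{a,b}(x))`. -/
def rab (f : H → ℝ) (Df : H → H) (κ : ℝ) (a b x : H) : ℝ :=
  Real.sqrt (alphaab f Df κ a b + betaab Df κ a b x)

/-- `Λ_x = {v : ‖v - v_{a,b}‖ ≤ r_{a,b}(x) for all a, b ∈ Ω}`. -/
def Lambda (f : H → ℝ) (Df : H → H) (κ : ℝ) (Ω : Set H) (x : H) : Set H :=
  {v | ∀ a ∈ Ω, ∀ b ∈ Ω, ‖v - vab Df κ a b‖ ≤ rab f Df κ a b x}

/-- `Ψ⁺(F, x, a, v)`. -/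
def PsiPlus (f : H → ℝ) (Df : H → H) (κ : ℝ) (x a v : H) : ℝ :=
  f a + 1 / 2 * ⟪Df a + v, x - a⟫ + κ / 4 * ‖a - x‖ ^ 2 - 1 / (4 * κ) * ‖Df a - v‖ ^ 2

/-- `Ψ⁻(F, x, a, v)`. -/
def PsiMinus (f : H → ℝ) (Df : H → H) (κ : ℝ) (x a v : H) : ℝ :=
  f a + 1 / 2 * ⟪Df a + v, x - a⟫ - κ / 4 * ‖a - x‖ ^ 2 + 1 / (4 * κ) * ‖Df a - v‖ ^ 2

/-- `inf_{a ∈ Ω} Ψ⁺(F, x, a, v)`. -/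
def infPsiPlus (f : H → ℝ) (Df : H → H) (κ : ℝ) (Ω : Set H) (x v : H) : ℝ :=
  sInf {t | ∃ a ∈ Ω, t = PsiPlus f Df κ x a v}

/-- `sup_{a ∈ Ω} Ψ⁻(F, x, a, v)`. -/
def supPsiMinus (f : H → ℝ) (Df : H → H) (κ : ℝ) (Ω : Set H) (x v : H) : ℝ :=
  sSup {t | ∃ a ∈ Ω, t = PsiMinus f Df κ x a v}

/-- `u⁺(x) = sup_{v ∈ Λ_x} inf_{a ∈ Ω} Ψ⁺(F, x, a, v)`. -/
def uPlus (f : H → ℝ) (Df : H → H) (κ : ℝ) (Ω : Set H) (x : H) : ℝ :=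
  sSup {t | ∃ v ∈ Lambda f Df κ Ω x, t = infPsiPlus f Df κ Ω x v}

/-- `u⁻(x) = inf_{v ∈ Λ_x} sup_{a ∈ Ω} Ψ⁻(F, x, a, v)`. -/
def uMinus (f : H → ℝ) (Df : H → H) (κ : ℝ) (Ω : Set H) (x : H) : ℝ :=
  sInf {t | ∃ v ∈ Lambda f Df κ Ω x, t = supPsiMinus f Df κ Ω x v}

/-- `(g, Dg)` is a minimal Lipschitz extension of the 1-field `(f, Df)` of domain `Ω` to `H`. -/
def IsMLE (f : H → ℝ) (Df : H → H) (Ω : Set H) (g : H → ℝ) (Dg : H → H) : Prop :=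
  (∀ x ∈ Ω, g x = f x ∧ Dg x = Df x) ∧ gammaOn g Dg Set.univ = gammaOn f Df Ω

/-- Over extremal MLE. -/
def IsOverExtremal (f : H → ℝ) (Df : H → H) (Ω : Set H) (g₁ : H → ℝ) (Dg₁ : H → H) : Prop :=
  IsMLE f Df Ω g₁ Dg₁ ∧ ∀ g Dg, IsMLE f Df Ω g Dg → ∀ x, g x ≤ g₁ x

/-- Under extremal MLE. -/
def IsUnderExtremal (f : H → ℝ) (Df : H → H) (Ω : Set H) (g₂ : H → ℝ) (Dg₂ : H → H) : Prop :=
  IsMLE f Df Ω g₂ Dg₂ ∧ ∀ g Dg, IsMLE f Df Ω g Dg → ∀ x, g₂ x ≤ g x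

/-- Absolutely minimal Lipschitz extension. -/
def IsAMLE (f : H → ℝ) (Df : H → H) (Ω : Set H) (g : H → ℝ) (Dg : H → H) : Prop :=
  IsMLE f Df Ω g Dg ∧
    ∀ V : Set H, V.Nonempty → IsOpen V → Bornology.IsBounded V → closure V ⊆ Ωᶜ →
      gammaOn g Dg V = gammaOn g Dg (frontier V)

end PsiDefs
section MyAux

variable {H : Type*} [NormedAddCommGroup H] [InnerProductSpace ℝ H]

lemma my_pointwise (g : H → ℝ) (Dg : H → H) {κ : ℝ} {x y : H} (hxy : x ≠ y)
    (h : gammaPair g Dg x y ≤ κ) (t : H) :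
    2 * |fieldEval g Dg x t - fieldEval g Dg y t| ≤ κ * (‖x - t‖ ^ 2 + ‖y - t‖ ^ 2) := by
  have hxy' : 0 < ‖x - y‖ := norm_sub_pos_iff.mpr hxy
  set d : ℝ := ‖x - y‖ ^ 2 / 2 with hd_def
  have hd : 0 < d := by positivity
  have hD : ∀ s : H, d ≤ ‖x - s‖ ^ 2 + ‖y - s‖ ^ 2 := by
    intro s
    have h1 : ‖x - y‖ ≤ ‖x - s‖ + ‖y - s‖ := by
      have : x - y = (x - s) - (y - s) := by abel
      rw [this]; exact norm_sub_le _ _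
    rw [hd_def]
    nlinarith [norm_nonneg (x - s), norm_nonneg (y - s), norm_nonneg (x - y),
      sq_nonneg (‖x - s‖ - ‖y - s‖)]
  have hDpos : ∀ s : H, 0 < ‖x - s‖ ^ 2 + ‖y - s‖ ^ 2 := fun s => lt_of_lt_of_le hd (hD s)
  set c0 : ℝ := g x - g y - ⟪Dg y, x - y⟫ with hc0
  set w : H := Dg x - Dg y with hw
  have hN : ∀ s : H, fieldEval g Dg x s - fieldEval g Dg y s = c0 + ⟪w, s - x⟫ := by
    intro s
    simp only [fieldEval, hc0, hw, inner_sub_left, inner_sub_right]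
    ring
  have hsq : Real.sqrt d ^ 2 = d := Real.sq_sqrt hd.le
  have hsqpos : 0 < Real.sqrt d := Real.sqrt_pos.mpr hd
  have hub : ∀ s : H, 2 * |fieldEval g Dg x s - fieldEval g Dg y s| / (‖x - s‖ ^ 2 + ‖y - s‖ ^ 2) ≤ 2 * |c0| / d + 2 * ‖w‖ / Real.sqrt d := by
    intro s
    have hDs := hD s
    have hDp := hDpos s
    have hn1 : |fieldEval g Dg x s - fieldEval g Dg y s| ≤ |c0| + ‖w‖ * ‖s - x‖ := by
      rw [hN s]
      refine le_trans (abs_add_le _ _) ?_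
      exact add_le_add (le_refl _) (abs_real_inner_le_norm _ _)
    have hDT : Real.sqrt d * ‖s - x‖ ≤ ‖x - s‖ ^ 2 + ‖y - s‖ ^ 2 := by
      have h3 : ‖s - x‖ = ‖x - s‖ := norm_sub_rev _ _
      rw [h3]
      nlinarith [norm_nonneg (x - s), sq_nonneg ‖y - s‖, hsqpos.le, hDs, hDp, sq_nonneg (Real.sqrt d * ‖x - s‖ - (‖x - s‖ ^ 2 + ‖y - s‖ ^ 2))]
    rw [div_le_iff₀ hDp]
    have e1 : 2 * |c0| ≤ (2 * |c0| / d) * (‖x - s‖ ^ 2 + ‖y - s‖ ^ 2) := by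
      rw [div_mul_eq_mul_div, le_div_iff₀ hd]
      nlinarith [abs_nonneg c0, hDs]
    have e2 : 2 * (‖w‖ * ‖s - x‖) ≤ (2 * ‖w‖ / Real.sqrt d) * (‖x - s‖ ^ 2 + ‖y - s‖ ^ 2) := by
      rw [div_mul_eq_mul_div, le_div_iff₀ hsqpos]
      nlinarith [norm_nonneg w, hDT, norm_nonneg (s - x)]
    have hMD : (2 * |c0| / d + 2 * ‖w‖ / Real.sqrt d) * (‖x - s‖ ^ 2 + ‖y - s‖ ^ 2)
        = (2 * |c0| / d) * (‖x - s‖ ^ 2 + ‖y - s‖ ^ 2)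
          + (2 * ‖w‖ / Real.sqrt d) * (‖x - s‖ ^ 2 + ‖y - s‖ ^ 2) := by
      ring
    linarith
  have hBdd2 : BddAbove (Set.range fun a : H =>
      2 * |fieldEval g Dg x a - fieldEval g Dg y a| / (‖x - a‖ ^ 2 + ‖y - a‖ ^ 2)) :=
    ⟨_, by rintro _ ⟨s, rfl⟩; exact hub s⟩
  have hle : 2 * |fieldEval g Dg x t - fieldEval g Dg y t| / (‖x - t‖ ^ 2 + ‖y - t‖ ^ 2) ≤ κ := by
    rw [gammaPair] at h
    exact le_trans (le_ciSup hBdd2 t) h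
  rw [div_le_iff₀ (hDpos t)] at hle
  linarith

lemma my_bound_plus (f : H → ℝ) (Df : H → H) {κ : ℝ} (hκ : 0 < κ) (gx : ℝ) (x y v : H)
    (h : ∀ t : H, 2 * (gx + ⟪v, t - x⟫ - (f y + ⟪Df y, t - y⟫)) ≤ κ * (‖x - t‖ ^ 2 + ‖y - t‖ ^ 2)) :
    gx ≤ PsiPlus f Df κ x y v := by
  set t : H := (1/2 : ℝ) • (x + y) + (1/(2*κ)) • (v - Df y) with ht
  have h1 := h t
  have key : κ * (‖x - t‖ ^ 2 + ‖y - t‖ ^ 2)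
      = 2 * (PsiPlus f Df κ x y v - (f y + ⟪Df y, t - y⟫) + ⟪v, t - x⟫) := by
    rw [ht]
    simp only [PsiPlus, ← real_inner_self_eq_norm_sq, inner_sub_left, inner_sub_right,
      inner_add_left, inner_add_right, real_inner_smul_left, real_inner_smul_right,
      real_inner_comm]
    field_simp
    ring
  linarith

lemma my_bound_minus (f : H → ℝ) (Df : H → H) {κ : ℝ} (hκ : 0 < κ) (gx : ℝ) (x y v : H)
    (h : ∀ t : H, 2 * ((f y + ⟪Df y, t - y⟫) - (gx + ⟪v, t - x⟫)) ≤ κ * (‖x - t‖ ^ 2 + ‖y - t‖ ^ 2)) :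
    PsiMinus f Df κ x y v ≤ gx := by
  set t : H := (1/2 : ℝ) • (x + y) - (1/(2*κ)) • (v - Df y) with ht
  have h1 := h t
  have key : κ * (‖x - t‖ ^ 2 + ‖y - t‖ ^ 2)
      = 2 * ((f y + ⟪Df y, t - y⟫) - ⟪v, t - x⟫ - PsiMinus f Df κ x y v) := by
    rw [ht]
    simp only [PsiMinus, ← real_inner_self_eq_norm_sq, inner_sub_left, inner_sub_right,
      inner_add_left, inner_add_right, real_inner_smul_left, real_inner_smul_right,
      real_inner_comm]
    field_simp
    ring
  linarith

lemma my_lambda_ident (f : H → ℝ) (Df : H → H) {κ : ℝ} (hκ : 0 < κ) (x a b v : H) :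
    2 * κ * (PsiPlus f Df κ x a v - PsiMinus f Df κ x b v)
      = alphaab f Df κ a b + betaab Df κ a b x - ‖v - vab Df κ a b‖ ^ 2 := by
  simp only [PsiPlus, PsiMinus, alphaab, betaab, vab, ← real_inner_self_eq_norm_sq,
    inner_sub_left, inner_sub_right, inner_add_left, inner_add_right,
    real_inner_smul_left, real_inner_smul_right, real_inner_comm]
  field_simp
  ring


lemma my_lambda_ball (f : H → ℝ) (Df : H → H) {κ : ℝ} (hκ : 0 < κ) {Ω : Set H} (x : H)
    {a : H} (ha : a ∈ Ω) {v : H} (hv : v ∈ Lambda f Df κ Ω x) :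
    ‖v - Df a‖ ≤ κ * ‖x - a‖ := by
  have h := hv a ha a ha
  have h1 : vab Df κ a a = Df a := by
    rw [vab, sub_self, smul_zero, add_zero]
    module
  have h2 : rab f Df κ a a x = κ * ‖x - a‖ := by
    rw [rab]
    have hα : alphaab f Df κ a a = 0 := by
      simp [alphaab, sub_self, inner_zero_right]
    have hβ : betaab Df κ a a x = (κ * ‖x - a‖) ^ 2 := by
      rw [betaab]
      have heq : (1/2 : ℝ) • (Df a - Df a) + (κ/2) • ((2:ℝ) • x - a - a) = κ • (x - a) := by
        module
      rw [heq, norm_smul, Real.norm_eq_abs, abs_of_pos hκ]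
    rw [hα, hβ, zero_add, Real.sqrt_sq (by positivity)]
  rwa [h1, h2] at h

lemma my_psiPlus_le (f : H → ℝ) (Df : H → H) {κ : ℝ} (hκ : 0 < κ) (x a v : H)
    (hball : ‖v - Df a‖ ≤ κ * ‖x - a‖) :
    PsiPlus f Df κ x a v
      ≤ f a + (2 * ‖Df a‖ + κ * ‖x - a‖) * ‖x - a‖ / 2 + κ / 4 * ‖x - a‖ ^ 2 := by
  have h1 : ⟪Df a + v, x - a⟫ ≤ ‖Df a + v‖ * ‖x - a‖ := real_inner_le_norm _ _
  have h2 : ‖Df a + v‖ ≤ 2 * ‖Df a‖ + κ * ‖x - a‖ := by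
    have heq : Df a + v = (v - Df a) + (Df a + Df a) := by abel
    calc ‖Df a + v‖ = ‖(v - Df a) + (Df a + Df a)‖ := by rw [← heq]
      _ ≤ ‖v - Df a‖ + ‖Df a + Df a‖ := norm_add_le _ _
      _ ≤ κ * ‖x - a‖ + (‖Df a‖ + ‖Df a‖) := add_le_add hball (norm_add_le _ _)
      _ = 2 * ‖Df a‖ + κ * ‖x - a‖ := by ring
  have h3 : ‖a - x‖ = ‖x - a‖ := norm_sub_rev _ _
  have h4 : 0 ≤ 1/(4*κ) * ‖Df a - v‖ ^ 2 := by positivity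
  have h5 : ‖Df a + v‖ * ‖x - a‖ ≤ (2 * ‖Df a‖ + κ * ‖x - a‖) * ‖x - a‖ :=
    mul_le_mul_of_nonneg_right h2 (norm_nonneg _)
  simp only [PsiPlus, h3]
  linarith

lemma my_psiMinus_ge (f : H → ℝ) (Df : H → H) {κ : ℝ} (hκ : 0 < κ) (x a v : H)
    (hball : ‖v - Df a‖ ≤ κ * ‖x - a‖) :
    f a - (2 * ‖Df a‖ + κ * ‖x - a‖) * ‖x - a‖ / 2 - κ / 4 * ‖x - a‖ ^ 2
      ≤ PsiMinus f Df κ x a v := by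
  have h1 : |⟪Df a + v, x - a⟫| ≤ ‖Df a + v‖ * ‖x - a‖ := abs_real_inner_le_norm _ _
  have h1' := neg_abs_le ⟪Df a + v, x - a⟫
  have h2 : ‖Df a + v‖ ≤ 2 * ‖Df a‖ + κ * ‖x - a‖ := by
    have heq : Df a + v = (v - Df a) + (Df a + Df a) := by abel
    calc ‖Df a + v‖ = ‖(v - Df a) + (Df a + Df a)‖ := by rw [← heq]
      _ ≤ ‖v - Df a‖ + ‖Df a + Df a‖ := norm_add_le _ _
      _ ≤ κ * ‖x - a‖ + (‖Df a‖ + ‖Df a‖) := add_le_add hball (norm_add_le _ _)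
      _ = 2 * ‖Df a‖ + κ * ‖x - a‖ := by ring
  have h3 : ‖a - x‖ = ‖x - a‖ := norm_sub_rev _ _
  have h4 : 0 ≤ 1/(4*κ) * ‖Df a - v‖ ^ 2 := by positivity
  have h5 : ‖Df a + v‖ * ‖x - a‖ ≤ (2 * ‖Df a‖ + κ * ‖x - a‖) * ‖x - a‖ :=
    mul_le_mul_of_nonneg_right h2 (norm_nonneg _)
  simp only [PsiMinus, h3]
  linarith

lemma my_psi_bounds (f : H → ℝ) (Df : H → H) (Ω : Set H) (g : H → ℝ) (Dg : H → H)
    {κ : ℝ} (hκ : 0 < κ)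
    (hagree : ∀ y ∈ Ω, g y = f y ∧ Dg y = Df y)
    (hpair : ∀ p q : H, p ≠ q → gammaPair g Dg p q ≤ κ)
    (x : H) {y : H} (hy : y ∈ Ω) :
    PsiMinus f Df κ x y (Dg x) ≤ g x ∧ g x ≤ PsiPlus f Df κ x y (Dg x) := by
  obtain ⟨hgy, hDgy⟩ := hagree y hy
  by_cases hxy : x = y
  · subst hxy
    constructor
    · simp [PsiMinus, hgy, hDgy, sub_self, hκ.ne']
    · simp [PsiPlus, hgy, hDgy, sub_self, hκ.ne']
  · have hp := my_pointwise g Dg hxy (hpair x y hxy)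
    have hp' : ∀ t : H, 2 * |(g x + ⟪Dg x, t - x⟫) - (f y + ⟪Df y, t - y⟫)|
        ≤ κ * (‖x - t‖ ^ 2 + ‖y - t‖ ^ 2) := by
      intro t
      have h0 := hp t
      simpa [fieldEval, hgy, hDgy] using h0
    constructor
    · apply my_bound_minus f Df hκ (g x) x y (Dg x)
      intro t
      have h0 := hp' t
      have h2 := neg_abs_le ((g x + ⟪Dg x, t - x⟫) - (f y + ⟪Df y, t - y⟫))
      linarith
    · apply my_bound_plus f Df hκ (g x) x y (Dg x)
      intro t
      have h0 := hp' t
      have h2 := le_abs_self ((g x + ⟪Dg x, t - x⟫) - (f y + ⟪Df y, t - y⟫))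
      linarith


end MyAux

/-- Let `F = (f, Df)` be a Taylorian 1-field on a nonempty `Ω ⊆ ℝⁿ` with
`κ := Γ¹(F;Ω) > 0`. Then every minimal Lipschitz extension `G = (g, Dg)` of `F` on `ℝⁿ`
satisfies `u⁻(x) ≤ g_x ≤ u⁺(x)` for all `x ∈ ℝⁿ`. -/
theorem stmt_14 {n : ℕ} (hn : 1 ≤ n) (Ω : Set (EuclideanSpace ℝ (Fin n)))
    (hΩne : Ω.Nonempty)
    (f : EuclideanSpace ℝ (Fin n) → ℝ)
    (Df : EuclideanSpace ℝ (Fin n) → EuclideanSpace ℝ (Fin n))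
    (hTay : BddAbove (gammaVals f Df Ω))
    (hκpos : 0 < gammaOn f Df Ω) :
    ∀ (g : EuclideanSpace ℝ (Fin n) → ℝ)
      (Dg : EuclideanSpace ℝ (Fin n) → EuclideanSpace ℝ (Fin n)),
      IsMLE f Df Ω g Dg →
        ∀ x : EuclideanSpace ℝ (Fin n),
          uMinus f Df (gammaOn f Df Ω) Ω x ≤ g x ∧
          g x ≤ uPlus f Df (gammaOn f Df Ω) Ω x := by
  intro g Dg hMLE x
  obtain ⟨hagree, hgam⟩ := hMLE
  set κ : ℝ := gammaOn f Df Ω with hκdef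
  have hκ : 0 < κ := hκpos
  have hBdd : BddAbove (gammaVals g Dg (Set.univ : Set (EuclideanSpace ℝ (Fin n)))) := by
    by_contra hb
    rw [gammaOn, Real.sSup_of_not_bddAbove hb] at hgam
    exact hκ.ne' hgam.symm
  have hpair : ∀ p q : EuclideanSpace ℝ (Fin n), p ≠ q → gammaPair g Dg p q ≤ κ := by
    intro p q hpq
    have hmem : gammaPair g Dg p q ∈ gammaVals g Dg Set.univ :=
      ⟨p, trivial, q, trivial, hpq, rfl⟩
    have h0 := le_csSup hBdd hmem
    rwa [← gammaOn, hgam] at h0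
  have hDb : ∀ a ∈ Ω, PsiMinus f Df κ x a (Dg x) ≤ g x ∧ g x ≤ PsiPlus f Df κ x a (Dg x) :=
    fun a ha => my_psi_bounds f Df Ω g Dg hκ hagree hpair x ha
  have hvΛ : Dg x ∈ Lambda f Df κ Ω x := by
    simp only [Lambda, Set.mem_setOf_eq]
    intro a ha b hb
    have h1 : PsiMinus f Df κ x b (Dg x) ≤ PsiPlus f Df κ x a (Dg x) :=
      le_trans (hDb b hb).1 (hDb a ha).2
    have hid := my_lambda_ident f Df hκ x a b (Dg x)
    have hpos : 0 ≤ 2 * κ * (PsiPlus f Df κ x a (Dg x) - PsiMinus f Df κ x b (Dg x)) :=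
      mul_nonneg (by linarith) (sub_nonneg.mpr h1)
    have hnn : ‖Dg x - vab Df κ a b‖ ^ 2 ≤ alphaab f Df κ a b + betaab Df κ a b x := by
      linarith
    rw [rab]
    exact (Real.le_sqrt (norm_nonneg _) (le_trans (sq_nonneg _) hnn)).mpr hnn
  obtain ⟨a₀, ha₀⟩ := hΩne
  have hball : ∀ v ∈ Lambda f Df κ Ω x, ‖v - Df a₀‖ ≤ κ * ‖x - a₀‖ :=
    fun v hv => my_lambda_ball f Df hκ x ha₀ hv
  constructor
  · have hsup : supPsiMinus f Df κ Ω x (Dg x) ≤ g x := by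
      rw [supPsiMinus]
      apply csSup_le
      · exact ⟨PsiMinus f Df κ x a₀ (Dg x), a₀, ha₀, rfl⟩
      · rintro t ⟨a, ha, rfl⟩
        exact (hDb a ha).1
    have hSbdd : BddBelow {t | ∃ v ∈ Lambda f Df κ Ω x, t = supPsiMinus f Df κ Ω x v} := by
      refine ⟨min 0 (f a₀ - (2 * ‖Df a₀‖ + κ * ‖x - a₀‖) * ‖x - a₀‖ / 2
        - κ / 4 * ‖x - a₀‖ ^ 2), ?_⟩
      rintro t ⟨v, hv, rfl⟩
      by_cases hbb : BddAbove {t | ∃ a ∈ Ω, t = PsiMinus f Df κ x a v}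
      · have h1 : PsiMinus f Df κ x a₀ v ≤ supPsiMinus f Df κ Ω x v :=
          le_csSup hbb ⟨a₀, ha₀, rfl⟩
        have h2 := my_psiMinus_ge f Df hκ x a₀ v (hball v hv)
        exact le_trans (min_le_right _ _) (le_trans h2 h1)
      · rw [supPsiMinus, Real.sSup_of_not_bddAbove hbb]
        exact min_le_left _ _
    rw [uMinus]
    exact le_trans (csInf_le hSbdd ⟨Dg x, hvΛ, rfl⟩) hsup
  · have hinf : g x ≤ infPsiPlus f Df κ Ω x (Dg x) := by
      rw [infPsiPlus]
      apply le_csInf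
      · exact ⟨PsiPlus f Df κ x a₀ (Dg x), a₀, ha₀, rfl⟩
      · rintro t ⟨a, ha, rfl⟩
        exact (hDb a ha).2
    have hSbdd : BddAbove {t | ∃ v ∈ Lambda f Df κ Ω x, t = infPsiPlus f Df κ Ω x v} := by
      refine ⟨max 0 (f a₀ + (2 * ‖Df a₀‖ + κ * ‖x - a₀‖) * ‖x - a₀‖ / 2
        + κ / 4 * ‖x - a₀‖ ^ 2), ?_⟩
      rintro t ⟨v, hv, rfl⟩
      by_cases hbb : BddBelow {t | ∃ a ∈ Ω, t = PsiPlus f Df κ x a v}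
      · have h1 : infPsiPlus f Df κ Ω x v ≤ PsiPlus f Df κ x a₀ v :=
          csInf_le hbb ⟨a₀, ha₀, rfl⟩
        have h2 := my_psiPlus_le f Df hκ x a₀ v (hball v hv)
        exact le_trans (le_trans h1 h2) (le_max_right _ _)
      · rw [infPsiPlus, Real.sInf_of_not_bddBelow hbb]
        exact le_max_left _ _
    rw [uPlus]
    exact le_trans hinf (le_csSup hSbdd ⟨Dg x, hvΛ, rfl⟩)
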